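/- For every prime p > 7, one has (t(p) + 2·l(p) − 1)/p < (1 + l(p))/2^{l(p)} as real numbers, where l(p) and t(p) are the length and tail of the sequence of lower halves of p. -/

import Mathlib

/-- The lower half of a positive integer: `lh m = ⌊m/2⌋`. -/
def lh (m : ℕ) : ℕ := m / 2

/-- The length of the sequence of lower halves of `n`: the least positive `i`
such that the `i`-th iterate of `lh` at `n` lies in `{2, 3, 4}`. -/
noncomputable def lhLen (n : ℕ) : ℕ :=
  sInf {i : ℕ | 0 < i ∧ lh^[i] n ∈ ({2, 3, 4} : Set ℕ)}

/-- The tail of the sequence of lower halves of `n`: its last term. -/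
noncomputable def lhTail (n : ℕ) : ℕ := lh^[lhLen n] n

lemma lh_iterate (i n : ℕ) : lh^[i] n = n / 2 ^ i := by
  induction i generalizing n with
  | zero => simp
  | succ k ih =>
    rw [Function.iterate_succ_apply, ih]
    show n / 2 / 2 ^ k = _
    rw [Nat.div_div_eq_div_mul, pow_succ']

theorem ratio_lt_f_of_len (p : ℕ) (hp : p.Prime) (h7 : 7 < p) :
    ((lhTail p : ℝ) + 2 * (lhLen p : ℝ) - 1) / (p : ℝ)
      < (1 + (lhLen p : ℝ)) / 2 ^ (lhLen p) := by
  have hp8 : 8 ≤ p := h7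
  -- the defining set is nonempty
  have hlog : 3 ≤ Nat.log 2 p := by
    calc 3 = Nat.log 2 8 := by norm_num [Nat.log]
    _ ≤ Nat.log 2 p := Nat.log_mono_right hp8
  set i₀ := Nat.log 2 p - 1 with hi₀
  have hi₀pos : 0 < i₀ := by omega
  have hi₀succ : i₀ + 1 = Nat.log 2 p := by omega
  have hlow : 2 ^ Nat.log 2 p ≤ p := Nat.pow_log_le_self 2 (by omega)
  have hhigh : p < 2 ^ (Nat.log 2 p + 1) := Nat.lt_pow_succ_log_self (by norm_num) p
  have hmem₀ : i₀ ∈ {i : ℕ | 0 < i ∧ lh^[i] p ∈ ({2, 3, 4} : Set ℕ)} := by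
    refine ⟨hi₀pos, ?_⟩
    rw [lh_iterate]
    have h1 : 2 ≤ p / 2 ^ i₀ := by
      have : 2 ^ i₀ * 2 ≤ p := by
        rw [← pow_succ, hi₀succ]; exact hlow
      exact Nat.le_div_iff_mul_le (Nat.pow_pos (by norm_num)) |>.2
        (by omega)
    have h2 : p / 2 ^ i₀ < 4 := by
      apply Nat.div_lt_of_lt_mul
      calc p < 2 ^ (Nat.log 2 p + 1) := hhigh
      _ = 2 ^ i₀ * 4 := by rw [← hi₀succ]; ring
    interval_cases h : p / 2 ^ i₀ <;> simp
  have hne : {i : ℕ | 0 < i ∧ lh^[i] p ∈ ({2, 3, 4} : Set ℕ)}.Nonempty := ⟨i₀, hmem₀⟩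
  have hmem : lhLen p ∈ {i : ℕ | 0 < i ∧ lh^[i] p ∈ ({2, 3, 4} : Set ℕ)} :=
    Nat.sInf_mem hne
  obtain ⟨hlpos, hts⟩ := hmem
  set l := lhLen p
  set t := lhTail p with htdef
  have ht : 2 ≤ t ∧ t ≤ 4 := by
    have : lh^[l] p ∈ ({2, 3, 4} : Set ℕ) := hts
    rw [show lh^[l] p = t from rfl] at this
    simp only [Set.mem_insert_iff, Set.mem_singleton_iff] at this
    omega
  have htb : 2 ^ l * t ≤ p := by
    have : t = p / 2 ^ l := by rw [htdef, lhTail, lh_iterate]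
    rw [this]
    exact Nat.mul_div_le p (2 ^ l) |>.trans_eq (by ring_nf) |>.trans (le_refl p)
  -- now the real inequality
  have hppos : (0 : ℝ) < p := by positivity
  have hxpos : (0 : ℝ) < 2 ^ l := by positivity
  rw [div_lt_div_iff₀ hppos hxpos]
  have htb' : (2 : ℝ) ^ l * t ≤ p := by
    calc (2 : ℝ) ^ l * t = ((2 ^ l * t : ℕ) : ℝ) := by push_cast; ring
    _ ≤ p := by exact_mod_cast htb
  have hl1 : (1 : ℝ) ≤ l := by exact_mod_cast hlpos
  have ht2 : (2 : ℝ) ≤ t := by exact_mod_cast ht.1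
  nlinarith [mul_pos hxpos (show (0:ℝ) < l from by linarith),
    mul_le_mul_of_nonneg_right htb' (show (0:ℝ) ≤ 1 + l by linarith),
    mul_lt_mul_of_pos_left (show (2:ℝ)*l - 1 < t*l from by nlinarith) hxpos]
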